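/- Let a, b, c > 0 and suppose (U1, U2) has the bivariate generalised beta type I density with parameters a, b, c. Then (V1, V2) = (1/U1, 1/U2) has joint density v1^{-a-1} v2^{-b-1} (1 - 1/v1)^{b+c-1} (1 - 1/v2)^{a+c-1} (1 - 1/(v1 v2))^{-(a+b+c)} / β*(a,b,c) on (1,∞)×(1,∞). -/

import Mathlib

open MeasureTheory ENNReal

private lemma det_aux (d₁ d₂ : ℝ) :
    (((1 : ℝ →L[ℝ] ℝ).smulRight d₁).prodMap ((1 : ℝ →L[ℝ] ℝ).smulRight d₂)).det = d₁ * d₂ := by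
  show LinearMap.det _ = _
  rw [← LinearMap.det_toMatrix (Module.Basis.finTwoProd ℝ), Matrix.det_fin_two]
  simp [LinearMap.toMatrix_apply]

private lemma pow_aux (e v : ℝ) (hv : 1 < v) :
    ((v : ℝ) ^ (2:ℕ))⁻¹ * (1 / v) ^ (e - 1) = v ^ (-e - 1) := by
  have hv0 : 0 < v := lt_trans one_pos hv
  rw [one_div, ← Real.rpow_natCast v 2, ← Real.rpow_neg hv0.le,
    Real.inv_rpow hv0.le, ← Real.rpow_neg hv0.le, ← Real.rpow_add hv0]
  norm_num
  ring_nf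

theorem stmt_17 (a b c : ℝ) (ha : 0 < a) (hb : 0 < b) (hc : 0 < c) :
    Measure.map (fun p : ℝ × ℝ => (1 / p.1, 1 / p.2))
        ((volume : Measure (ℝ × ℝ)).withDensity fun p =>
          ENNReal.ofReal
            (if p.1 ∈ Set.Ioo (0 : ℝ) 1 ∧ p.2 ∈ Set.Ioo (0 : ℝ) 1 then
              p.1 ^ (a - 1) * p.2 ^ (b - 1) * (1 - p.1) ^ (b + c - 1) *
                (1 - p.2) ^ (a + c - 1) * (1 - p.1 * p.2) ^ (-(a + b + c)) /
                (Real.Gamma a * Real.Gamma b * Real.Gamma c / Real.Gamma (a + b + c))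
            else 0)) =
      (volume : Measure (ℝ × ℝ)).withDensity fun v =>
        ENNReal.ofReal
          (if 1 < v.1 ∧ 1 < v.2 then
            v.1 ^ (-a - 1) * v.2 ^ (-b - 1) * (1 - 1 / v.1) ^ (b + c - 1) *
              (1 - 1 / v.2) ^ (a + c - 1) * (1 - 1 / (v.1 * v.2)) ^ (-(a + b + c)) /
              (Real.Gamma a * Real.Gamma b * Real.Gamma c / Real.Gamma (a + b + c))
          else 0) := by
  set β := Real.Gamma a * Real.Gamma b * Real.Gamma c / Real.Gamma (a + b + c) with hβ
  set T : ℝ × ℝ → ℝ × ℝ := fun p => (1 / p.1, 1 / p.2) with hT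
  have hTT : ∀ p, T (T p) = p := by intro p; simp [hT]
  have hTmeas : Measurable T :=
    (measurable_fst.const_div 1).prodMk (measurable_snd.const_div 1)
  set F₀ : ℝ × ℝ → ℝ≥0∞ := fun p => ENNReal.ofReal
      (p.1 ^ (a - 1) * p.2 ^ (b - 1) * (1 - p.1) ^ (b + c - 1) *
        (1 - p.2) ^ (a + c - 1) * (1 - p.1 * p.2) ^ (-(a + b + c)) / β) with hF₀
  set G₀ : ℝ × ℝ → ℝ≥0∞ := fun v => ENNReal.ofReal
      (v.1 ^ (-a - 1) * v.2 ^ (-b - 1) * (1 - 1 / v.1) ^ (b + c - 1) *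
        (1 - 1 / v.2) ^ (a + c - 1) * (1 - 1 / (v.1 * v.2)) ^ (-(a + b + c)) / β) with hG₀
  set A : Set (ℝ × ℝ) := Set.Ioo (0:ℝ) 1 ×ˢ Set.Ioo (0:ℝ) 1 with hA
  set B : Set (ℝ × ℝ) := Set.Ioi (1:ℝ) ×ˢ Set.Ioi (1:ℝ) with hB
  have hAmeas : MeasurableSet A := measurableSet_Ioo.prod measurableSet_Ioo
  have hBmeas : MeasurableSet B := measurableSet_Ioi.prod measurableSet_Ioi
  ext s hs
  rw [Measure.map_apply hTmeas hs, withDensity_apply _ (hTmeas hs), withDensity_apply _ hs]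
  have hFind : (fun p : ℝ × ℝ => ENNReal.ofReal
      (if p.1 ∈ Set.Ioo (0 : ℝ) 1 ∧ p.2 ∈ Set.Ioo (0 : ℝ) 1 then
        p.1 ^ (a - 1) * p.2 ^ (b - 1) * (1 - p.1) ^ (b + c - 1) *
          (1 - p.2) ^ (a + c - 1) * (1 - p.1 * p.2) ^ (-(a + b + c)) / β
      else 0)) = A.indicator F₀ := by
    funext p
    by_cases hp : p ∈ A
    · rw [Set.indicator_of_mem hp]
      have : p.1 ∈ Set.Ioo (0:ℝ) 1 ∧ p.2 ∈ Set.Ioo (0:ℝ) 1 := ⟨hp.1, hp.2⟩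
      rw [if_pos this]
    · rw [Set.indicator_of_notMem hp]
      have : ¬ (p.1 ∈ Set.Ioo (0:ℝ) 1 ∧ p.2 ∈ Set.Ioo (0:ℝ) 1) := fun h => hp ⟨h.1, h.2⟩
      rw [if_neg this, ENNReal.ofReal_zero]
  have hGind : (fun v : ℝ × ℝ => ENNReal.ofReal
      (if 1 < v.1 ∧ 1 < v.2 then
        v.1 ^ (-a - 1) * v.2 ^ (-b - 1) * (1 - 1 / v.1) ^ (b + c - 1) *
          (1 - 1 / v.2) ^ (a + c - 1) * (1 - 1 / (v.1 * v.2)) ^ (-(a + b + c)) / β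
      else 0)) = B.indicator G₀ := by
    funext v
    by_cases hv : v ∈ B
    · rw [Set.indicator_of_mem hv, if_pos ⟨hv.1, hv.2⟩]
    · rw [Set.indicator_of_notMem hv,
        if_neg (fun h => hv ⟨h.1, h.2⟩), ENNReal.ofReal_zero]
  rw [hFind, hGind, lintegral_indicator hAmeas, lintegral_indicator hBmeas,
    Measure.restrict_restrict hAmeas, Measure.restrict_restrict hBmeas]
  -- set identification
  have hset : A ∩ T ⁻¹' s = T '' (B ∩ s) := by
    ext u
    constructor
    · rintro ⟨huA, hus⟩
      refine ⟨T u, ⟨⟨?_, ?_⟩, hus⟩, hTT u⟩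
      · exact one_lt_one_div huA.1.1 huA.1.2
      · exact one_lt_one_div huA.2.1 huA.2.2
    · rintro ⟨v, ⟨⟨hv1, hv2⟩, hvs⟩, rfl⟩
      have h1 : (0:ℝ) < v.1 := lt_trans one_pos hv1
      have h2 : (0:ℝ) < v.2 := lt_trans one_pos hv2
      refine ⟨⟨⟨by positivity, ?_⟩, ⟨by positivity, ?_⟩⟩, ?_⟩
      · exact (div_lt_one h1).2 hv1
      · exact (div_lt_one h2).2 hv2
      · show T (T v) ∈ s; rw [hTT]; exact hvs
  rw [hset]
  have hBS : MeasurableSet (B ∩ s) := hBmeas.inter hs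
  have hderiv : ∀ v ∈ B ∩ s, HasFDerivWithinAt T
      ((((1 : ℝ →L[ℝ] ℝ).smulRight (-(v.1 ^ 2)⁻¹)).prodMap
        ((1 : ℝ →L[ℝ] ℝ).smulRight (-(v.2 ^ 2)⁻¹)))) (B ∩ s) v := by
    intro v hv
    have h1 : v.1 ≠ 0 := ne_of_gt (lt_trans one_pos hv.1.1)
    have h2 : v.2 ≠ 0 := ne_of_gt (lt_trans one_pos hv.1.2)
    have : HasFDerivAt T ((((1 : ℝ →L[ℝ] ℝ).smulRight (-(v.1 ^ 2)⁻¹)).prodMap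
        ((1 : ℝ →L[ℝ] ℝ).smulRight (-(v.2 ^ 2)⁻¹)))) v := by
      have e1 := (hasDerivAt_inv h1).hasFDerivAt
      have e2 := (hasDerivAt_inv h2).hasFDerivAt
      have := e1.prodMap v e2
      convert this using 1
      · funext p; simp only [hT, one_div]; rfl
      · ext <;> simp
    exact this.hasFDerivWithinAt
  have hInj : Set.InjOn T (B ∩ s) := by
    intro x _ y _ hxy
    have := congrArg T hxy
    rwa [hTT, hTT] at this
  rw [lintegral_image_eq_lintegral_abs_det_fderiv_mul volume hBS hderiv hInj]
  refine setLIntegral_congr_fun hBS ?_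
  intro v hv
  have h1 : (1:ℝ) < v.1 := hv.1.1
  have h2 : (1:ℝ) < v.2 := hv.1.2
  have h10 : (0:ℝ) < v.1 := lt_trans one_pos h1
  have h20 : (0:ℝ) < v.2 := lt_trans one_pos h2
  beta_reduce
  rw [det_aux]
  have habs : |(-(v.1 ^ 2)⁻¹) * (-(v.2 ^ 2)⁻¹)| = (v.1 ^ 2)⁻¹ * (v.2 ^ 2)⁻¹ := by
    rw [neg_mul_neg, abs_of_pos]; positivity
  rw [habs, hF₀, ← ENNReal.ofReal_mul (by positivity)]
  rw [hG₀]
  congr 1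
  show (v.1 ^ 2)⁻¹ * (v.2 ^ 2)⁻¹ *
      ((1/v.1) ^ (a - 1) * (1/v.2) ^ (b - 1) * (1 - 1/v.1) ^ (b + c - 1) *
        (1 - 1/v.2) ^ (a + c - 1) * (1 - (1/v.1) * (1/v.2)) ^ (-(a + b + c)) / β) = _
  have e1 := pow_aux a v.1 h1
  have e2 := pow_aux b v.2 h2
  have emul : (1 - (1/v.1) * (1/v.2)) = (1 - 1/(v.1 * v.2)) := by
    rw [one_div, one_div, one_div, mul_inv]
  rw [emul]
  calc (v.1 ^ 2)⁻¹ * (v.2 ^ 2)⁻¹ *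
      ((1/v.1) ^ (a - 1) * (1/v.2) ^ (b - 1) * (1 - 1/v.1) ^ (b + c - 1) *
        (1 - 1/v.2) ^ (a + c - 1) * (1 - 1/(v.1 * v.2)) ^ (-(a + b + c)) / β)
      = ((v.1 ^ 2)⁻¹ * (1/v.1) ^ (a - 1)) * ((v.2 ^ 2)⁻¹ * (1/v.2) ^ (b - 1)) *
        (1 - 1/v.1) ^ (b + c - 1) * (1 - 1/v.2) ^ (a + c - 1) *
        (1 - 1/(v.1 * v.2)) ^ (-(a + b + c)) / β := by ring
    _ = _ := by rw [e1, e2]
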